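/- Consider f(x, y) = −x y e^{−x²−y²} + (1/2) y² on ℝ², the feasible set K = {(x, y) ∈ ℝ² : x + y ≤ 0}, and the projected gradient descent map T(p) = P_K(p − ᾱ∇f(p)) with constant step size 0 < ᾱ < 2/3, where P_K denotes Euclidean metric projection onto K. If for some k the iterate (x_k, y_k) of the projected gradient descent sequence satisfies x_k ≥ 0 and y_k = −x_k, then the sequence of iterates {(x_j, y_j)}_{j ≥ k} generated by repeated application of T converges to the origin (0, 0). -/
import Mathlib


/-- The objective `f(x, y) = −x y e^{−x²−y²} + (1/2) y²`. -/
noncomputable def fObj (p : ℝ × ℝ) : ℝ :=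
  -(p.1 * p.2) * Real.exp (-p.1 ^ 2 - p.2 ^ 2) + p.2 ^ 2 / 2

/-- The gradient `∇f(x, y)` of the objective `fObj`. -/
noncomputable def gradF (p : ℝ × ℝ) : ℝ × ℝ :=
  (-(1 - 2 * p.1 ^ 2) * p.2 * Real.exp (-p.1 ^ 2 - p.2 ^ 2),
   -(1 - 2 * p.2 ^ 2) * p.1 * Real.exp (-p.1 ^ 2 - p.2 ^ 2) + p.2)

/-- Euclidean metric projection onto the half-plane `K = {(x, y) : x + y ≤ 0}`. -/
noncomputable def projK (q : ℝ × ℝ) : ℝ × ℝ :=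
  if q.1 + q.2 ≤ 0 then q else (q.1 - (q.1 + q.2) / 2, q.2 - (q.1 + q.2) / 2)

/-- One step of projected gradient descent with step size `a`: `T(p) = P_K(p − a ∇f(p))`. -/
noncomputable def Tmap (a : ℝ) (p : ℝ × ℝ) : ℝ × ℝ :=
  projK (p - a • gradF p)

/-- Auxiliary: on the diagonal `y = -x`, one PGD step multiplies `x` by `1 - a · gFun x`. -/
noncomputable def gFun (x : ℝ) : ℝ := (1 - 2 * x ^ 2) * Real.exp (-x ^ 2 - x ^ 2) + 1 / 2

lemma gFun_bounds (x : ℝ) : 1/4 ≤ gFun x ∧ gFun x ≤ 3/2 := by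
  unfold gFun
  set u := x ^ 2 with hu
  have hu0 : 0 ≤ u := sq_nonneg x
  have hE : (-u - u) = (-(2*u)) := by ring
  rw [hE]
  have hEpos : 0 < Real.exp (-(2*u)) := Real.exp_pos _
  have hEle : Real.exp (-(2*u)) ≤ 1 := Real.exp_le_one_iff.mpr (by linarith)
  constructor
  · have key : 2*u - 1 ≤ (1/4) * Real.exp (2*u) := by
      have h1 : (1 + (2*u)/3) ^ 3 ≤ (Real.exp ((2*u)/3)) ^ 3 :=
        pow_le_pow_left₀ (by linarith) (by linarith [Real.add_one_le_exp ((2*u)/3)]) 3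
      have h2 : (Real.exp ((2*u)/3)) ^ 3 = Real.exp (2*u) := by
        rw [← Real.exp_nat_mul]; ring_nf
      have h3 : (2*u - 1) * 4 ≤ (1 + (2*u)/3)^3 := by
        nlinarith [sq_nonneg (u - 3/2), hu0, mul_nonneg hu0 (sq_nonneg (u - 3/2))]
      nlinarith
    have hp : 0 < Real.exp (2*u) := Real.exp_pos _
    have : -(1/4) ≤ (1 - 2*u) * Real.exp (-(2*u)) := by
      rw [Real.exp_neg, ← div_eq_mul_inv, le_div_iff₀ hp]
      nlinarith
    linarith
  · have : (1 - 2*u) * Real.exp (-(2*u)) ≤ 1 := by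
      rcases le_or_gt (1 - 2*u) 0 with h | h
      · nlinarith
      · nlinarith
    linarith

lemma Tmap_diag (a x : ℝ) (ha0 : 0 < a) (hx : 0 ≤ x) :
    Tmap a (x, -x) = (x * (1 - a * gFun x), -(x * (1 - a * gFun x))) := by
  have hq : (x, -x) - a • gradF (x, -x)
      = (x - a * ((1 - 2*x^2) * x * Real.exp (-x^2 - x^2)),
         -x + a * ((1 - 2*x^2) * x * Real.exp (-x^2 - x^2)) + a * x) := by
    simp [gradF, Prod.ext_iff, Prod.smul_def, smul_eq_mul]
    constructor <;> ring_nf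
  rw [Tmap, hq, projK]
  rcases eq_or_lt_of_le hx with h | h
  · subst h
    norm_num
  · have hsum : (x - a * ((1 - 2*x^2) * x * Real.exp (-x^2 - x^2)))
      + (-x + a * ((1 - 2*x^2) * x * Real.exp (-x^2 - x^2)) + a * x) = a * x := by ring
    simp only [hsum]
    rw [if_neg (not_le.mpr (mul_pos ha0 h))]
    simp only [Prod.ext_iff, gFun]
    constructor <;> ring

theorem stmt_5 (a : ℝ) (ha0 : 0 < a) (ha : a < 2 / 3)
    (z : ℕ → ℝ × ℝ) (hiter : ∀ j, z (j + 1) = Tmap a (z j))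
    (k : ℕ) (hx : 0 ≤ (z k).1) (hy : (z k).2 = -(z k).1) :
    Filter.Tendsto z Filter.atTop (nhds ((0 : ℝ), (0 : ℝ))) := by
  set c : ℝ := 1 - a / 4 with hc
  have hc0 : 0 < c := by rw [hc]; linarith
  have hc1 : c < 1 := by rw [hc]; linarith
  -- invariant along the iteration
  have inv : ∀ n, 0 ≤ (z (n + k)).1 ∧ (z (n + k)).2 = -(z (n + k)).1 ∧
      (z (n + k)).1 ≤ (z k).1 * c ^ n := by
    intro n
    induction n with
    | zero => simpa using ⟨hx, hy⟩
    | succ n ih =>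
      obtain ⟨h1, h2, h3⟩ := ih
      have hz : z (n + k) = ((z (n + k)).1, -(z (n + k)).1) := by
        rw [← h2]
      have hstep : z (n + 1 + k) = ((z (n + k)).1 * (1 - a * gFun (z (n + k)).1),
          -((z (n + k)).1 * (1 - a * gFun (z (n + k)).1))) := by
        have : n + 1 + k = (n + k) + 1 := by ring
        rw [this, hiter (n + k)]
        conv_lhs => rw [hz]
        exact Tmap_diag a _ ha0 h1
      obtain ⟨hg1, hg2⟩ := gFun_bounds (z (n + k)).1
      have hf0 : 0 ≤ 1 - a * gFun (z (n + k)).1 := by nlinarith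
      have hfc : 1 - a * gFun (z (n + k)).1 ≤ c := by rw [hc]; nlinarith
      refine ⟨?_, ?_, ?_⟩
      · rw [hstep]; exact mul_nonneg h1 hf0
      · rw [hstep]
      · rw [hstep]
        calc (z (n + k)).1 * (1 - a * gFun (z (n + k)).1)
            ≤ (z (n + k)).1 * c := mul_le_mul_of_nonneg_left hfc h1
          _ ≤ ((z k).1 * c ^ n) * c := mul_le_mul_of_nonneg_right h3 hc0.le
          _ = (z k).1 * c ^ (n + 1) := by ring
  -- first coordinate tends to 0
  have hx1 : Filter.Tendsto (fun n => (z (n + k)).1) Filter.atTop (nhds 0) := by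
    have hgeo : Filter.Tendsto (fun n => (z k).1 * c ^ n) Filter.atTop (nhds 0) := by
      have := tendsto_pow_atTop_nhds_zero_of_lt_one hc0.le hc1
      simpa using this.const_mul (z k).1
    exact squeeze_zero (fun n => (inv n).1) (fun n => (inv n).2.2) hgeo
  have hx2 : Filter.Tendsto (fun n => (z (n + k)).2) Filter.atTop (nhds 0) := by
    have : (fun n => (z (n + k)).2) = fun n => -(z (n + k)).1 := by
      funext n; exact (inv n).2.1
    rw [this]
    simpa using hx1.neg
  have hshift : Filter.Tendsto (fun n => z (n + k)) Filter.atTop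
      (nhds ((0 : ℝ), (0 : ℝ))) := by
    rw [Prod.tendsto_iff]
    exact ⟨hx1, hx2⟩
  exact (Filter.tendsto_add_atTop_iff_nat k).mp hshift
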